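/- Assume the base hypotheses. Suppose lim_{t→∞} g(t)/(f∘F⁻¹)(t) = +∞, f ∈ RV₀(β) for some β > 1, g ∈ RV_∞(0) (g is slowly varying at infinity), g is asymptotic to a decreasing function (i.e., there exists a positive decreasing function γ₁ on (0,∞) with lim_{t→∞} g(t)/γ₁(t) = 1), and the unique continuous solution x of x'(t) = -f(x(t)) + g(t), x(0) = ξ > 0, satisfies x(t) → 0 as t → ∞. Then lim_{t→∞} f(x(t))/g(t) = 1. -/

import Mathlib

open Filter Real Set Topology MeasureTheory

noncomputable section

set_option maxHeartbeats 1000000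

/-- A function `f : (0,∞) → (0,∞)` is regularly varying at `0` with index `β` if
`f(λx)/f(x) → λ^β` as `x → 0⁺` for every `λ > 0`. -/
def RVat0 (f : ℝ → ℝ) (β : ℝ) : Prop :=
  ∀ lam : ℝ, 0 < lam →
    Tendsto (fun x => f (lam * x) / f x) (nhdsWithin 0 (Set.Ioi 0)) (nhds (lam ^ β))

/-- A function `h : (0,∞) → (0,∞)` is regularly varying at `∞` with index `α` if
`h(λt)/h(t) → λ^α` as `t → ∞` for every `λ > 0`. -/
def RVatInf (h : ℝ → ℝ) (α : ℝ) : Prop :=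
  ∀ lam : ℝ, 0 < lam →
    Tendsto (fun t => h (lam * t) / h t) atTop (nhds (lam ^ α))

/-- A continuous solution of the perturbed ODE `x'(t) = -f(x(t)) + g(t)`, `t > 0`,
with initial condition `x(0) = ξ`. -/
def IsSol (f g : ℝ → ℝ) (ξ : ℝ) (x : ℝ → ℝ) : Prop :=
  ContinuousOn x (Set.Ici 0) ∧ x 0 = ξ ∧
    ∀ t : ℝ, 0 < t → HasDerivAt x (-f (x t) + g t) t


/-- If the derivative at `t` is negative, then just to the left the values are bigger. -/
lemma left_gt_of_deriv_neg {x : ℝ → ℝ} {t d : ℝ} (hx : HasDerivAt x d t) (hd : d < 0) :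
    ∀ᶠ s in 𝓝[<] t, x t < x s := by
  have h := hasDerivAt_iff_tendsto_slope.1 hx
  have h2 : ∀ᶠ s in 𝓝[≠] t, slope x t s < 0 :=
    h.eventually (eventually_lt_nhds hd)
  have h3 : 𝓝[<] t ≤ 𝓝[≠] t := nhdsWithin_mono _ (fun s hs => ne_of_lt hs)
  filter_upwards [h3 h2, self_mem_nhdsWithin] with s hs hst
  have hst' : s - t < 0 := sub_neg.2 hst
  have heq : slope x t s = (x s - x t) / (s - t) := by
    rw [slope_def_field]
  rw [heq] at hs
  rcases div_neg_iff.1 hs with ⟨h1, h2⟩ | ⟨h1, h2⟩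
  · linarith
  · linarith

/-- If the derivative at `t` is positive, then just to the left the values are smaller. -/
lemma left_lt_of_deriv_pos {x : ℝ → ℝ} {t d : ℝ} (hx : HasDerivAt x d t) (hd : 0 < d) :
    ∀ᶠ s in 𝓝[<] t, x s < x t := by
  have h := left_gt_of_deriv_neg (x := fun s => -x s) (hx.neg) (by linarith)
  filter_upwards [h] with s hs
  simpa using hs

/-- If the derivative is `≤ -w` on `[a,b]`, then `x b - x a ≤ -w (b-a)`. -/
lemma decay_est {x : ℝ → ℝ} {a b w : ℝ} (hab : a ≤ b)
    (hc : ContinuousOn x (Icc a b))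
    (hder : ∀ s ∈ Ioo a b, ∃ d, HasDerivAt x d s ∧ d ≤ -w) :
    x b - x a ≤ -w * (b - a) := by
  set u : ℝ → ℝ := fun s => x s + w * s with hu
  have hu_cont : ContinuousOn u (Icc a b) := by
    exact hc.add ((continuous_const.mul continuous_id).continuousOn)
  have hu_diff : DifferentiableOn ℝ u (interior (Icc a b)) := by
    rw [interior_Icc]
    intro s hs
    obtain ⟨d, hd, _⟩ := hder s hs
    exact ((hd.add ((hasDerivAt_id s).const_mul w)).differentiableAt).differentiableWithinAt
  have hu_der : ∀ s ∈ interior (Icc a b), deriv u s ≤ 0 := by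
    rw [interior_Icc]
    intro s hs
    obtain ⟨d, hd, hdle⟩ := hder s hs
    have : HasDerivAt u (d + w) s := by
      have h := hd.add ((hasDerivAt_id s).const_mul w); rw [mul_one] at h; exact h
    rw [this.deriv]; linarith
  have := antitoneOn_of_deriv_nonpos (convex_Icc a b) hu_cont hu_diff hu_der
    (left_mem_Icc.2 hab) (right_mem_Icc.2 hab) hab
  simp only [hu] at this
  nlinarith [this]

/-- If the derivative is `≥ w` on `[a,b]`, then `x b - x a ≥ w (b-a)`. -/
lemma growth_est {x : ℝ → ℝ} {a b w : ℝ} (hab : a ≤ b)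
    (hc : ContinuousOn x (Icc a b))
    (hder : ∀ s ∈ Ioo a b, ∃ d, HasDerivAt x d s ∧ w ≤ d) :
    w * (b - a) ≤ x b - x a := by
  have := decay_est (x := fun s => -x s) (w := w) hab hc.neg ?_
  · simp at this; linarith
  · intro s hs
    obtain ⟨d, hd, hdle⟩ := hder s hs
    exact ⟨-d, hd.neg, by linarith⟩

/-- The solution stays positive. -/
lemma sol_pos {f g x : ℝ → ℝ} {ξ : ℝ}
    (hf_zero : f 0 = 0) (hg_pos : ∀ t : ℝ, 0 < t → 0 < g t) (hξ : 0 < ξ)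
    (hx_cont : ContinuousOn x (Set.Ici 0)) (hx0 : x 0 = ξ)
    (hx_ode : ∀ t : ℝ, 0 < t → HasDerivAt x (-f (x t) + g t) t) :
    ∀ t : ℝ, 0 ≤ t → 0 < x t := by
  by_contra hcon
  push_neg at hcon
  obtain ⟨t₀, ht₀, ht₀'⟩ := hcon
  set T : Set ℝ := Set.Ici 0 ∩ x ⁻¹' (Set.Iic 0) with hT
  have hT_closed : IsClosed T :=
    hx_cont.preimage_isClosed_of_isClosed isClosed_Ici isClosed_Iic
  have hT_ne : T.Nonempty := ⟨t₀, ht₀, ht₀'⟩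
  have hT_bdd : BddBelow T := ⟨0, fun s hs => hs.1⟩
  set τ := sInf T with hτ
  have hτ_mem : τ ∈ T := hT_closed.csInf_mem hT_ne hT_bdd
  have hτ_nonneg : 0 ≤ τ := hτ_mem.1
  have hτ_le : x τ ≤ 0 := hτ_mem.2
  have hτ_pos : 0 < τ := by
    rcases lt_or_eq_of_le hτ_nonneg with h | h
    · exact h
    · exfalso; rw [← h, hx0] at hτ_le; linarith
  have hpos_before : ∀ s, 0 ≤ s → s < τ → 0 < x s := by
    intro s hs hsτ
    by_contra hxs
    push_neg at hxs
    have : s ∈ T := ⟨hs, hxs⟩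
    exact absurd (csInf_le hT_bdd this) (not_le.2 hsτ)
  have hca : ContinuousAt x τ := hx_cont.continuousAt (Ici_mem_nhds hτ_pos)
  have hev2 : ∀ᶠ s in 𝓝[<] τ, 0 < s :=
    eventually_nhdsWithin_of_eventually_nhds
      (eventually_of_mem (Ioi_mem_nhds hτ_pos) (fun s hs => hs))
  have hxτ : x τ = 0 := by
    rcases lt_or_eq_of_le hτ_le with h | h
    · exfalso
      have hev : ∀ᶠ s in 𝓝[<] τ, x s < 0 :=
        eventually_nhdsWithin_of_eventually_nhds
          (hca (Iio_mem_nhds h) : ∀ᶠ s in 𝓝 τ, x s < 0)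
      obtain ⟨s, hs1, hs2, hs3⟩ := (hev.and (hev2.and self_mem_nhdsWithin)).exists
      exact absurd hs1 (not_lt.2 (le_of_lt (hpos_before s hs2.le hs3)))
    · exact h
  have hder : HasDerivAt x (g τ) τ := by
    have := hx_ode τ hτ_pos
    rwa [hxτ, hf_zero, neg_zero, zero_add] at this
  have hev := left_lt_of_deriv_pos hder (hg_pos τ hτ_pos)
  obtain ⟨s, hs1, hs2, hs3⟩ := (hev.and (hev2.and self_mem_nhdsWithin)).exists
  rw [hxτ] at hs1
  exact absurd hs1 (not_lt.2 (le_of_lt (hpos_before s hs2.le hs3)))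

/-- Uniform convergence theorem for "additively regularly varying" continuous functions,
via the Baire category theorem. -/
lemma uniform_additive {H : ℝ → ℝ} {β : ℝ} (hH : Continuous H)
    (hlim : ∀ c : ℝ, 0 ≤ c → Tendsto (fun u => H (u + c) - H u) atTop (nhds (-(β*c)))) :
    ∀ ε > (0:ℝ), ∀ L ≥ (0:ℝ), ∃ U : ℝ, ∀ u ≥ U, ∀ d ∈ Icc (0:ℝ) L,
      |H (u + d) - H u + β * d| ≤ ε := by
  intro ε hε L hL
  -- pointwise eventual bounds
  have hpt : ∀ c : ℝ, 0 ≤ c → ∃ U : ℝ, ∀ u ≥ U, |H (u + c) - H u + β * c| ≤ ε/4 := by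
    intro c hc
    have h1 : ∀ᶠ u in atTop, dist (H (u + c) - H u) (-(β*c)) ≤ ε/4 :=
      (hlim c hc).eventually (Metric.closedBall_mem_nhds _ (by linarith))
    obtain ⟨U, hU⟩ := eventually_atTop.1 h1
    refine ⟨U, fun u hu => ?_⟩
    have := hU u hu
    rw [Real.dist_eq] at this
    calc |H (u + c) - H u + β * c| = |(H (u + c) - H u) - (-(β*c))| := by ring_nf
      _ ≤ ε/4 := this
  -- Baire category on [0,1]
  haveI : Nonempty (Icc (0:ℝ) 1) := ⟨⟨0, by norm_num⟩⟩
  haveI : CompleteSpace (Icc (0:ℝ) 1) := isClosed_Icc.completeSpace_coe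
  set C : ℕ → Set (Icc (0:ℝ) 1) := fun n =>
    {c | ∀ u : ℝ, (n:ℝ) ≤ u → |H (u + c.val) - H u + β * c.val| ≤ ε/4} with hC
  have hclosed : ∀ n, IsClosed (C n) := by
    intro n
    have : C n = ⋂ (u : ℝ) (_ : (n:ℝ) ≤ u),
        {c : Icc (0:ℝ) 1 | |H (u + c.val) - H u + β * c.val| ≤ ε/4} := by
      ext c; simp [hC]
    rw [this]
    refine isClosed_iInter fun u => isClosed_iInter fun _ => ?_
    apply isClosed_le _ continuous_const
    exact (continuous_abs.comp
      (((hH.comp (continuous_const.add continuous_subtype_val)).sub continuous_const).add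
        (continuous_const.mul continuous_subtype_val)))
  have hcover : (⋃ n, C n) = univ := by
    ext c
    simp only [mem_iUnion, mem_univ, iff_true]
    obtain ⟨U, hU⟩ := hpt c.val c.2.1
    refine ⟨⌈U⌉₊, fun u hu => hU u (le_trans (Nat.le_ceil U) hu)⟩
  obtain ⟨n, c₀, hc₀⟩ := nonempty_interior_of_iUnion_of_closed hclosed hcover
  obtain ⟨r, hr, hball⟩ := Metric.mem_nhds_iff.1 (mem_interior_iff_mem_nhds.1 hc₀)
  -- extract a base point a' with [a', a'+δ'] in the ball
  set δ' : ℝ := min (r/2) (1/4) with hδ'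
  have hδ'pos : 0 < δ' := by positivity
  have hδ'le : δ' ≤ 1/4 := min_le_right _ _
  have hδ'r : δ' ≤ r/2 := min_le_left _ _
  have ha01 := c₀.2
  simp only [mem_Icc] at ha01
  have key : ∃ a' : ℝ, 0 ≤ a' ∧ ∀ d ∈ Icc (0:ℝ) δ', ∀ u : ℝ, (n:ℝ) ≤ u →
      |H (u + (a' + d)) - H u + β * (a' + d)| ≤ ε/4 := by
    by_cases hcase : c₀.val ≤ 1/2
    · refine ⟨c₀.val, ha01.1, fun d hd u hu => ?_⟩
      have hmem : (c₀.val + d) ∈ Icc (0:ℝ) 1 := by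
        constructor
        · linarith [ha01.1, hd.1]
        · linarith [hd.2, hδ'le]
      have : (⟨c₀.val + d, hmem⟩ : Icc (0:ℝ) 1) ∈ C n := by
        apply hball
        rw [Metric.mem_ball, Subtype.dist_eq, Real.dist_eq]
        simp only
        rw [abs_of_nonneg (by linarith [hd.1])]
        linarith [hd.2, hδ'r]
      exact this u hu
    · push_neg at hcase
      refine ⟨c₀.val - δ', by linarith, fun d hd u hu => ?_⟩
      have hmem : (c₀.val - δ' + d) ∈ Icc (0:ℝ) 1 := by
        constructor
        · linarith [hd.1, hδ'le]
        · linarith [ha01.2, hd.2, hδ'pos, hd.1]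
      have : (⟨c₀.val - δ' + d, hmem⟩ : Icc (0:ℝ) 1) ∈ C n := by
        apply hball
        rw [Metric.mem_ball, Subtype.dist_eq, Real.dist_eq]
        simp only
        have h1 : |c₀.val - δ' + d - c₀.val| ≤ δ' := by
          rw [abs_le]; constructor <;> nlinarith [hd.1, hd.2]
        linarith [hδ'r, hr]
      exact this u hu
  obtain ⟨a', ha'0, ha'⟩ := key
  -- step bound on [0, δ']
  have step : ∀ u : ℝ, (n:ℝ) ≤ u → ∀ d ∈ Icc (0:ℝ) δ',
      |H (u + d) - H u + β * d| ≤ ε/2 := by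
    intro u hu d hd
    have Q1 := ha' d hd u hu
    have Q2 := ha' 0 ⟨le_refl 0, le_of_lt hδ'pos⟩ (u + d) (by linarith [hd.1])
    rw [add_zero] at Q2
    have hid : H (u + d) - H u + β * d =
        (H (u + (a' + d)) - H u + β * (a' + d)) -
        (H (u + d + a') - H (u + d) + β * a') := by
      rw [show u + (a' + d) = u + d + a' by ring]; ring
    rw [hid]
    calc |_ - _| ≤ |H (u + (a' + d)) - H u + β * (a' + d)| +
        |H (u + d + a') - H (u + d) + β * a'| := abs_sub _ _
      _ ≤ ε/4 + ε/4 := add_le_add Q1 Q2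
      _ = ε/2 := by ring
  -- chaining to [0, L]
  set k : ℕ := ⌈L / δ'⌉₊ with hk
  have grid : ∀ m : ℕ, ∃ U : ℝ, ∀ j : ℕ, j ≤ m → ∀ u ≥ U,
      |H (u + (j:ℝ) * δ') - H u + β * ((j:ℝ) * δ')| ≤ ε/4 := by
    intro m
    induction m with
    | zero =>
      obtain ⟨U, hU⟩ := hpt 0 (le_refl 0)
      exact ⟨U, fun j hj u hu => by
        simp only [Nat.le_zero.1 hj, Nat.cast_zero, zero_mul]
        simpa using hU u hu⟩
    | succ m ih =>
      obtain ⟨U₁, hU₁⟩ := ih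
      obtain ⟨U₂, hU₂⟩ := hpt ((m+1:ℕ) * δ') (by positivity)
      refine ⟨max U₁ U₂, fun j hj u hu => ?_⟩
      rcases eq_or_lt_of_le hj with h | h
      · subst h
        have := hU₂ u (le_trans (le_max_right _ _) hu)
        simpa using this
      · exact hU₁ j (Nat.lt_succ_iff.1 h) u (le_trans (le_max_left _ _) hu)
  obtain ⟨U₀, hU₀⟩ := grid k
  refine ⟨max U₀ ((n:ℝ)), fun u hu d hd => ?_⟩
  have hun : (n:ℝ) ≤ u := le_trans (le_max_right _ _) hu
  have huU : U₀ ≤ u := le_trans (le_max_left _ _) hu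
  set j : ℕ := ⌊d / δ'⌋₊ with hj
  have hjk : j ≤ k := by
    have hdiv : d / δ' ≤ L / δ' := by gcongr; exact hd.2
    exact le_trans (Nat.floor_le_floor hdiv) (Nat.floor_le_ceil _)
  have hjd : (j:ℝ) * δ' ≤ d := by
    have := Nat.floor_le (div_nonneg hd.1 hδ'pos.le)
    calc (j:ℝ) * δ' ≤ (d / δ') * δ' := by nlinarith [hδ'pos]
      _ = d := by field_simp
  have hjd2 : d - (j:ℝ) * δ' ≤ δ' := by
    have := Nat.lt_floor_add_one (d / δ')
    have h2 : d < ((j:ℝ) + 1) * δ' := by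
      rw [hj]
      calc d = (d / δ') * δ' := by field_simp
        _ < ((⌊d / δ'⌋₊ : ℝ) + 1) * δ' := by nlinarith [hδ'pos]
    nlinarith
  have A := hU₀ j hjk u huU
  have B := step (u + (j:ℝ) * δ') (by linarith [mul_nonneg (Nat.cast_nonneg j) hδ'pos.le])
    (d - (j:ℝ) * δ') ⟨by linarith, hjd2⟩
  have hid : H (u + d) - H u + β * d =
      (H (u + (j:ℝ) * δ') - H u + β * ((j:ℝ) * δ')) +
      (H (u + (j:ℝ) * δ' + (d - (j:ℝ) * δ')) - H (u + (j:ℝ) * δ') +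
        β * (d - (j:ℝ) * δ')) := by
    rw [show u + (j:ℝ) * δ' + (d - (j:ℝ) * δ') = u + d by ring]; ring
  rw [hid]
  calc |_ + _| ≤ _ + _ := abs_add_le _ _
    _ ≤ ε/4 + ε/2 := add_le_add A B
    _ ≤ ε := by linarith

/-- Multiplicative uniform convergence for a continuous regularly varying (at 0⁺) function. -/
lemma uctf {f : ℝ → ℝ} {β : ℝ} (hf_cont : Continuous f)
    (hf_pos : ∀ y : ℝ, 0 < y → 0 < f y)
    (hfRV : ∀ lam : ℝ, 0 < lam →
      Tendsto (fun x => f (lam * x) / f x) (nhdsWithin 0 (Set.Ioi 0)) (nhds (lam ^ β))) :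
    ∀ ε : ℝ, 0 < ε → ε < 1 → ∃ x₁ : ℝ, 0 < x₁ ∧ x₁ ≤ 1 ∧
      ∀ z : ℝ, 0 < z → z ≤ x₁ → ∀ lam : ℝ, 1 ≤ lam → lam ≤ 2 →
        (1-ε) * (lam ^ β) * f z ≤ f (lam * z) ∧ f (lam * z) ≤ (1+ε) * (lam ^ β) * f z := by
  intro ε hε hε1
  set H : ℝ → ℝ := fun u => Real.log (f (Real.exp (-u))) with hHdef
  have hH : Continuous H := by
    apply Continuous.log
    · exact hf_cont.comp (Real.continuous_exp.comp continuous_neg)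
    · exact fun u => ne_of_gt (hf_pos _ (Real.exp_pos _))
  have hexp_tendsto : Tendsto (fun u : ℝ => Real.exp (-u)) atTop (nhdsWithin 0 (Set.Ioi 0)) := by
    rw [tendsto_nhdsWithin_iff]
    exact ⟨Real.tendsto_exp_neg_atTop_nhds_zero,
      Eventually.of_forall fun u => Real.exp_pos _⟩
  have hlim : ∀ c : ℝ, 0 ≤ c → Tendsto (fun u => H (u + c) - H u) atTop (nhds (-(β*c))) := by
    intro c hc
    have hlam : (0:ℝ) < Real.exp (-c) := Real.exp_pos _
    have h3 := (hfRV _ hlam).comp hexp_tendsto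
    have h4 := h3.log (ne_of_gt (Real.rpow_pos_of_pos hlam β))
    have heq : (fun u => Real.log (f (Real.exp (-c) * Real.exp (-u)) / f (Real.exp (-u))))
        = fun u => H (u + c) - H u := by
      funext u
      rw [← Real.exp_add]
      rw [Real.log_div (ne_of_gt (hf_pos _ (Real.exp_pos _))) (ne_of_gt (hf_pos _ (Real.exp_pos _)))]
      rw [hHdef]
      simp only
      rw [show -c + -u = -(u+c) by ring]
    have hval : Real.log (Real.exp (-c) ^ β) = -(β*c) := by
      rw [Real.log_rpow hlam, Real.log_exp]; ring
    rw [← hval]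
    rw [← heq]
    exact h4
  obtain ⟨U, hU⟩ := uniform_additive hH hlim (Real.log (1+ε)) (Real.log_pos (by linarith))
    (Real.log 2) (Real.log_nonneg (by norm_num))
  set U' : ℝ := max U 0 with hU'
  refine ⟨Real.exp (-(U' + Real.log 2)), Real.exp_pos _, ?_, ?_⟩
  · rw [Real.exp_le_one_iff]
    have : (0:ℝ) < Real.log 2 := Real.log_pos (by norm_num)
    simp only [hU', neg_nonpos]
    positivity
  intro z hz hzle lam hlam1 hlam2
  set d : ℝ := Real.log lam with hd
  have hlampos : (0:ℝ) < lam := by linarith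
  have hd0 : 0 ≤ d := Real.log_nonneg hlam1
  have hdL : d ≤ Real.log 2 := Real.log_le_log (by linarith) hlam2
  set v : ℝ := -Real.log z - d with hv
  have hvU : U ≤ v := by
    have h1 : Real.log z ≤ -(U' + Real.log 2) := by
      rw [← Real.log_exp (-(U' + Real.log 2))]
      exact Real.log_le_log hz hzle
    have h2 : U ≤ U' := le_max_left _ _
    simp only [hv]; linarith
  have key := hU v hvU d ⟨hd0, hdL⟩
  have hexp1 : Real.exp (-(v + d)) = z := by
    simp only [hv]
    rw [show -(-Real.log z - d + d) = Real.log z by ring, Real.exp_log hz]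
  have hexp2 : Real.exp (-v) = lam * z := by
    simp only [hv]
    rw [show -(-Real.log z - d) = Real.log z + d by ring, Real.exp_add, Real.exp_log hz,
      hd, Real.exp_log hlampos]
    ring
  rw [hHdef] at key
  simp only at key
  rw [hexp1, hexp2] at key
  -- key : |log (f z) - log (f (lam * z)) + β * d| ≤ log (1+ε)
  have hfz : 0 < f z := hf_pos _ hz
  have hflz : 0 < f (lam * z) := hf_pos _ (by positivity)
  have hlog : Real.log (f (lam * z)) - Real.log (f z) = Real.log (f (lam*z) / f z) :=
    (Real.log_div (ne_of_gt hflz) (ne_of_gt hfz)).symm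
  rw [abs_le] at key
  have hub : Real.log (f (lam*z) / f z) ≤ β * d + Real.log (1+ε) := by
    have := key.1; linarith [hlog]
  have hlb : β * d - Real.log (1+ε) ≤ Real.log (f (lam*z) / f z) := by
    have := key.2; linarith [hlog]
  have hratio : 0 < f (lam*z) / f z := by positivity
  have hlamrpow : Real.exp (β * d) = lam ^ β := by
    rw [hd, Real.rpow_def_of_pos hlampos]; ring_nf
  have hup : f (lam*z) / f z ≤ (1+ε) * lam ^ β := by
    have h1 : f (lam*z)/f z ≤ Real.exp (β * d + Real.log (1+ε)) := by
      rw [← Real.exp_log hratio]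
      exact Real.exp_le_exp.2 hub
    rw [Real.exp_add, hlamrpow, Real.exp_log (by linarith : (0:ℝ) < 1+ε)] at h1
    linarith [h1]
  have hdown : (1-ε) * lam ^ β ≤ f (lam*z) / f z := by
    have h1 : Real.exp (β * d - Real.log (1+ε)) ≤ f (lam*z)/f z := by
      rw [← Real.exp_log hratio]
      exact Real.exp_le_exp.2 hlb
    rw [Real.exp_sub, hlamrpow, Real.exp_log (by linarith : (0:ℝ) < 1+ε)] at h1
    have h2 : (1-ε) * lam ^ β ≤ lam ^ β / (1+ε) := by
      rw [le_div_iff₀ (by linarith : (0:ℝ) < 1+ε)]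
      nlinarith [mul_nonneg (mul_nonneg hε.le hε.le) (Real.rpow_pos_of_pos hlampos β).le]
    linarith
  have hcancel : (f (lam*z) / f z) * f z = f (lam*z) := div_mul_cancel₀ _ (ne_of_gt hfz)
  constructor
  · calc (1-ε) * lam ^ β * f z ≤ (f (lam*z) / f z) * f z :=
        mul_le_mul_of_nonneg_right hdown hfz.le
      _ = f (lam*z) := hcancel
  · calc f (lam*z) = (f (lam*z) / f z) * f z := hcancel.symm
      _ ≤ (1+ε) * lam ^ β * f z := mul_le_mul_of_nonneg_right hup hfz.le

/-- dyadic bracketing of a real `r ≥ 1`. -/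
lemma exists_dyadic (r : ℝ) (hr : 1 ≤ r) : ∃ K : ℕ, (2:ℝ)^K ≤ r ∧ r < 2^(K+1) := by
  refine ⟨⌊Real.logb 2 r⌋₊, ?_, ?_⟩
  · have h0 : (0:ℝ) < r := by linarith
    have h1 : (⌊Real.logb 2 r⌋₊ : ℝ) ≤ Real.logb 2 r :=
      Nat.floor_le (Real.logb_nonneg (by norm_num) hr)
    calc (2:ℝ)^(⌊Real.logb 2 r⌋₊) = (2:ℝ)^((⌊Real.logb 2 r⌋₊ : ℝ)) := by
          rw [Real.rpow_natCast]
      _ ≤ (2:ℝ)^(Real.logb 2 r) := Real.rpow_le_rpow_of_exponent_le (by norm_num) h1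
      _ = r := Real.rpow_logb (by norm_num) (by norm_num) h0
  · have h0 : (0:ℝ) < r := by linarith
    have h1 : Real.logb 2 r < (⌊Real.logb 2 r⌋₊ : ℝ) + 1 := Nat.lt_floor_add_one _
    calc r = (2:ℝ)^(Real.logb 2 r) := (Real.rpow_logb (by norm_num) (by norm_num) h0).symm
      _ < (2:ℝ)^((⌊Real.logb 2 r⌋₊ : ℝ) + 1) := Real.rpow_lt_rpow_of_exponent_lt (by norm_num) h1
      _ = (2:ℝ)^(⌊Real.logb 2 r⌋₊ + 1) := by
          rw [← Real.rpow_natCast 2 (⌊Real.logb 2 r⌋₊ + 1)]; push_cast; ring_nf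

/-- Almost monotonicity of a regularly varying function near `0`. -/
lemma almost_mono {f : ℝ → ℝ} {β x₁ ε : ℝ}
    (hf_pos : ∀ y : ℝ, 0 < y → 0 < f y)
    (hβ : 1 ≤ β) (hε : 0 < ε) (hε2 : ε ≤ 1/2)
    (huct : ∀ z : ℝ, 0 < z → z ≤ x₁ → ∀ lam : ℝ, 1 ≤ lam → lam ≤ 2 →
      (1-ε) * (lam ^ β) * f z ≤ f (lam * z)) :
    ∀ a b : ℝ, 0 < a → a ≤ b → b ≤ x₁ → (1-ε) * f a ≤ f b := by
  have hone : ∀ lam : ℝ, 1 ≤ lam → (1:ℝ) ≤ lam ^ β := by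
    intro lam hlam
    exact Real.one_le_rpow hlam (by linarith)
  have htwo : (2:ℝ) ≤ (2:ℝ) ^ β := by
    calc (2:ℝ) = (2:ℝ)^(1:ℝ) := (Real.rpow_one 2).symm
      _ ≤ (2:ℝ)^β := Real.rpow_le_rpow_of_exponent_le (by norm_num) hβ
  have aux : ∀ K : ℕ, ∀ a b : ℝ, 0 < a → b ≤ x₁ →
      (2:ℝ)^K * a ≤ b → b < 2^(K+1) * a → (1-ε) * f a ≤ f b := by
    intro K
    induction K with
    | zero =>
      intro a b ha hb h1 h2
      simp only [pow_zero, one_mul] at h1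
      have hab : b = (b/a) * a := by field_simp
      have hlam1 : 1 ≤ b/a := (one_le_div ha).2 h1
      have hlam2 : b/a ≤ 2 := by
        rw [div_le_iff₀ ha]
        simpa [pow_one] using h2.le
      have hthis := huct a ha (le_trans h1 hb) (b/a) hlam1 hlam2
      rw [← hab] at hthis
      have hstep : (1-ε) * f a ≤ (1-ε) * ((b/a) ^ β) * f a := by
        have h1' : (1:ℝ) * f a ≤ (b/a)^β * f a :=
          mul_le_mul_of_nonneg_right (hone _ hlam1) (hf_pos a ha).le
        have h2' := mul_le_mul_of_nonneg_left h1' (by linarith : (0:ℝ) ≤ 1-ε)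
        nlinarith [h2']
      exact le_trans hstep hthis
    | succ K ih =>
      intro a b ha hb h1 h2
      have h2a : (2:ℝ)*a ≤ b := by
        have : (2:ℝ) ≤ 2^(K+1) := by
          calc (2:ℝ) = 2^1 := (pow_one 2).symm
            _ ≤ 2^(K+1) := pow_le_pow_right₀ (by norm_num) (by omega)
        nlinarith
      have hax : a ≤ x₁ := by nlinarith
      have h2ax : 2*a ≤ x₁ := le_trans h2a hb
      have hf2a : (1-ε) * (2:ℝ)^β * f a ≤ f (2*a) := huct a ha hax 2 (by norm_num) (by norm_num)
      have hfa_le : f a ≤ f (2*a) := by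
        have h3 : (1:ℝ) ≤ (1-ε) * (2:ℝ)^β := by nlinarith
        nlinarith [hf_pos a ha]
      have hK1 : (2:ℝ)^K * (2*a) ≤ b := by
        calc (2:ℝ)^K * (2*a) = 2^(K+1) * a := by ring
          _ ≤ b := h1
      have hK2 : b < (2:ℝ)^(K+1) * (2*a) := by
        calc b < (2:ℝ)^(K+1+1) * a := h2
          _ = 2^(K+1) * (2*a) := by ring
      have := ih (2*a) b (by linarith) hb hK1 hK2
      nlinarith [hf_pos b (by nlinarith : (0:ℝ) < b), hf_pos (2*a) (by linarith)]
  intro a b ha hab hb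
  obtain ⟨K, hK1, hK2⟩ := exists_dyadic (b/a) ((one_le_div ha).2 hab)
  exact aux K a b ha hb ((le_div_iff₀ ha).1 hK1) ((div_lt_iff₀ ha).1 hK2)

lemma gamma_ratio {g γ₁ : ℝ → ℝ} {c : ℝ} (hc : 0 < c)
    (hγ₁_pos : ∀ t : ℝ, 0 < t → 0 < γ₁ t) (hg_pos : ∀ t : ℝ, 0 < t → 0 < g t)
    (hgγ₁ : Tendsto (fun t => g t / γ₁ t) atTop (nhds 1))
    (hgSV_c : Tendsto (fun t => g (c*t) / g t) atTop (nhds 1)) :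
    Tendsto (fun t => γ₁ (c*t) / γ₁ t) atTop (nhds 1) := by
  have hmul : Tendsto (fun t : ℝ => c * t) atTop atTop :=
    Tendsto.const_mul_atTop hc tendsto_id
  have hA : Tendsto (fun t => g (c*t) / γ₁ (c*t)) atTop (nhds 1) := hgγ₁.comp hmul
  have hAinv : Tendsto (fun t => (g (c*t) / γ₁ (c*t))⁻¹) atTop (nhds 1) := by
    have := hA.inv₀ one_ne_zero
    simpa using this
  have hprod := (hAinv.mul hgSV_c).mul hgγ₁
  rw [show (1:ℝ) * 1 * 1 = 1 by ring] at hprod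
  apply hprod.congr'
  filter_upwards [eventually_gt_atTop (0:ℝ)] with t ht
  have hct : 0 < c * t := by positivity
  rw [inv_div]
  field_simp [ne_of_gt (hg_pos _ hct), ne_of_gt (hg_pos _ ht),
    ne_of_gt (hγ₁_pos _ hct), ne_of_gt (hγ₁_pos _ ht)]

/-- two-sided window comparison for `g` on `[t/2, t]`. -/
lemma g_window {g γ₁ : ℝ → ℝ}
    (hg_pos : ∀ t : ℝ, 0 < t → 0 < g t)
    (hγ₁_pos : ∀ t : ℝ, 0 < t → 0 < γ₁ t)
    (hγ₁_anti : StrictAntiOn γ₁ (Set.Ioi 0))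
    (hgγ₁ : Tendsto (fun t => g t / γ₁ t) atTop (nhds 1))
    (hhalf : Tendsto (fun t => γ₁ (2⁻¹*t) / γ₁ t) atTop (nhds 1))
    (δ : ℝ) (hδ : 0 < δ) (hδ1 : δ ≤ 1) :
    ∀ᶠ t in atTop, ∀ s ∈ Icc (2⁻¹*t) t, (1-δ)*g t ≤ g s ∧ g s ≤ (1+δ)*g t := by
  set δ₁ : ℝ := δ/8 with hδ₁
  have hδ₁pos : 0 < δ₁ := by positivity
  have hanti_le : ∀ u v : ℝ, 0 < u → u ≤ v → γ₁ v ≤ γ₁ u := by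
    intro u v hu huv
    rcases eq_or_lt_of_le huv with h | h
    · rw [h]
    · exact (hγ₁_anti (mem_Ioi.2 hu) (mem_Ioi.2 (lt_trans hu h)) h).le
  have hE1 : ∀ᶠ t in atTop, γ₁ (2⁻¹*t) ≤ (1+δ₁) * γ₁ t := by
    have h1 : ∀ᶠ t in atTop, γ₁ (2⁻¹*t) / γ₁ t < 1 + δ₁ :=
      hhalf.eventually (eventually_lt_nhds (by linarith))
    filter_upwards [h1, eventually_gt_atTop (0:ℝ)] with t h2 h3
    have := hγ₁_pos t h3
    rw [div_lt_iff₀ this] at h2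
    linarith
  have hE2 : ∀ᶠ u in atTop, (1-δ₁) * γ₁ u ≤ g u ∧ g u ≤ (1+δ₁) * γ₁ u := by
    have h1 : ∀ᶠ u in atTop, 1 - δ₁ < g u / γ₁ u :=
      hgγ₁.eventually (eventually_gt_nhds (by linarith))
    have h2 : ∀ᶠ u in atTop, g u / γ₁ u < 1 + δ₁ :=
      hgγ₁.eventually (eventually_lt_nhds (by linarith))
    filter_upwards [h1, h2, eventually_gt_atTop (0:ℝ)] with u hu1 hu2 hu3
    have hp := hγ₁_pos u hu3
    rw [lt_div_iff₀ hp] at hu1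
    rw [div_lt_iff₀ hp] at hu2
    constructor <;> linarith
  obtain ⟨T₁, hT₁⟩ := eventually_atTop.1 hE1
  obtain ⟨T₂, hT₂⟩ := eventually_atTop.1 hE2
  rw [eventually_atTop]
  refine ⟨max (2*T₂) (max T₁ 2), fun t ht => ?_⟩
  have ht2 : 2 ≤ t := le_trans (le_trans (le_max_right _ _) (le_max_right _ _)) ht
  have htpos : 0 < t := by linarith
  have htT₁ : T₁ ≤ t := le_trans (le_trans (le_max_left _ _) (le_max_right _ _)) ht
  have htT₂ : 2*T₂ ≤ t := le_trans (le_max_left _ _) ht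
  intro s hs
  have hs1 : 2⁻¹ * t ≤ s := hs.1
  have hs2 : s ≤ t := hs.2
  have hspos : 0 < s := by nlinarith
  have hsT₂ : T₂ ≤ s := by nlinarith
  have htT₂' : T₂ ≤ t := by nlinarith [hsT₂, hs2]
  obtain ⟨hgs1, hgs2⟩ := hT₂ s hsT₂
  obtain ⟨hgt1, hgt2⟩ := hT₂ t htT₂'
  have hγt := hγ₁_pos t htpos
  have hγs := hγ₁_pos s hspos
  have hγht := hγ₁_pos (2⁻¹*t) (by positivity)
  have hE1t := hT₁ t htT₁
  constructor
  · -- lower bound : (1-δ)*g t ≤ g s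
    have h3 : γ₁ t ≤ γ₁ s := hanti_le s t hspos hs2
    have h4 : (1-δ₁) * γ₁ t ≤ g s := by linarith [mul_le_mul_of_nonneg_left h3 (by linarith : (0:ℝ) ≤ 1-δ₁)]
    -- g t ≤ (1+δ₁) γ₁ t, want (1-δ)*g t ≤ (1-δ₁)*γ₁ t
    have h5 : (1-δ)*g t ≤ (1-δ₁) * γ₁ t := by nlinarith [hγt]
    linarith
  · -- upper bound : g s ≤ (1+δ)*g t
    have h3 : γ₁ s ≤ γ₁ (2⁻¹*t) := hanti_le (2⁻¹*t) s (by positivity) hs1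
    have h4 : g s ≤ (1+δ₁)^2 * γ₁ t := by nlinarith
    have h5 : (1+δ₁)^2 * γ₁ t ≤ (1+δ)*g t := by nlinarith [hγt]
    linarith

/-- `t γ₁ t → ∞`. -/
lemma tgamma_top {g γ₁ : ℝ → ℝ}
    (hg_pos : ∀ t : ℝ, 0 < t → 0 < g t)
    (hγ₁_pos : ∀ t : ℝ, 0 < t → 0 < γ₁ t)
    (hγ₁_anti : StrictAntiOn γ₁ (Set.Ioi 0))
    (hdouble : Tendsto (fun t => γ₁ (2*t) / γ₁ t) atTop (nhds 1)) :
    Tendsto (fun t => t * γ₁ t) atTop atTop := by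
  rw [tendsto_atTop]
  intro C
  -- sequence along powers of two
  have hpow : Tendsto (fun n : ℕ => (2:ℝ)^n) atTop atTop :=
    tendsto_pow_atTop_atTop_of_one_lt (by norm_num)
  have hseq : Tendsto (fun n : ℕ => γ₁ (2*(2:ℝ)^n) / γ₁ ((2:ℝ)^n)) atTop (nhds 1) :=
    hdouble.comp hpow
  have hev : ∀ᶠ n : ℕ in atTop, (3/4:ℝ) ≤ γ₁ (2*(2:ℝ)^n) / γ₁ ((2:ℝ)^n) :=
    hseq.eventually (eventually_ge_nhds (by norm_num))
  obtain ⟨N, hN⟩ := eventually_atTop.1 hev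
  set a : ℕ → ℝ := fun n => (2:ℝ)^n * γ₁ ((2:ℝ)^n) with ha
  have hapos : ∀ n, 0 < a n := fun n => by
    have := hγ₁_pos ((2:ℝ)^n) (by positivity); positivity
  have hstep : ∀ n, N ≤ n → (3/2) * a n ≤ a (n+1) := by
    intro n hn
    have h1 := hN n hn
    have hp := hγ₁_pos ((2:ℝ)^n) (by positivity)
    rw [le_div_iff₀ hp] at h1
    have : (2:ℝ)^(n+1) = 2 * (2:ℝ)^n := by ring
    simp only [ha, this]
    nlinarith [pow_pos (show (0:ℝ) < 2 by norm_num) n]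
  have hgrow : ∀ m : ℕ, (3/2:ℝ)^m * a N ≤ a (N + m) := by
    intro m
    induction m with
    | zero => simp
    | succ m ih =>
      have h1 := hstep (N + m) (Nat.le_add_right N m)
      have h2 : (3/2:ℝ)^(m+1) * a N = (3/2) * ((3/2:ℝ)^m * a N) := by ring
      rw [h2, show N + (m+1) = (N + m) + 1 by ring]
      calc (3/2:ℝ) * ((3/2:ℝ)^m * a N) ≤ (3/2) * a (N + m) := by nlinarith [ih]
        _ ≤ a (N + m + 1) := h1
  -- choose M with a n ≥ 2 max C 1 for n ≥ M
  have hpow32 : Tendsto (fun m : ℕ => (3/2:ℝ)^m * a N) atTop atTop :=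
    Tendsto.atTop_mul_const (hapos N) (tendsto_pow_atTop_atTop_of_one_lt (by norm_num))
  obtain ⟨m₀, hm₀⟩ := eventually_atTop.1 (hpow32.eventually_ge_atTop (2 * max C 1))
  set M := N + m₀ with hM
  have haM : ∀ n, M ≤ n → 2 * max C 1 ≤ a n := by
    intro n hn
    obtain ⟨m, rfl⟩ := Nat.exists_eq_add_of_le (le_trans (Nat.le_add_right N m₀) hn : N ≤ n)
    have hm : m₀ ≤ m := by omega
    exact le_trans (hm₀ m hm) (hgrow m)
  rw [eventually_atTop]
  refine ⟨(2:ℝ)^M, fun t ht => ?_⟩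
  have ht1 : (1:ℝ) ≤ t := le_trans (one_le_pow₀ (by norm_num : (1:ℝ) ≤ 2)) ht
  obtain ⟨K, hK1, hK2⟩ := exists_dyadic t ht1
  have hKM : M ≤ K + 1 := by
    by_contra hcon
    push_neg at hcon
    have : K + 1 ≤ M := by omega
    have : (2:ℝ)^(K+1) ≤ (2:ℝ)^M := pow_le_pow_right₀ (by norm_num) this
    linarith
  have htpos : 0 < t := by linarith
  have hγt : γ₁ ((2:ℝ)^(K+1)) ≤ γ₁ t := by
    rcases eq_or_lt_of_le hK2.le with h | h
    · rw [h]
    · exact (hγ₁_anti (mem_Ioi.2 htpos) (mem_Ioi.2 (by positivity)) hK2).le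
  have hfin : a (K+1) ≤ 2 * (t * γ₁ t) := by
    have h1 : (2:ℝ)^(K+1) ≤ 2*t := by
      have : (2:ℝ)^(K+1) = 2 * (2:ℝ)^K := by ring
      nlinarith
    have h2 := hγ₁_pos ((2:ℝ)^(K+1)) (by positivity)
    calc a (K+1) = (2:ℝ)^(K+1) * γ₁ ((2:ℝ)^(K+1)) := rfl
      _ ≤ 2*t * γ₁ ((2:ℝ)^(K+1)) := by nlinarith
      _ ≤ 2*t * γ₁ t := by nlinarith [hγ₁_pos t htpos]
      _ = 2 * (t * γ₁ t) := by ring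
  have := haM (K+1) hKM
  have hC : C ≤ max C 1 := le_max_left _ _
  linarith

/-- The key barrier estimate at a fixed large time `t₁`. -/
lemma barrier {f g x : ℝ → ℝ} {ε x₁ : ℝ}
    (hε : 0 < ε) (hε1 : ε ≤ 1)
    (hx_cont : ContinuousOn x (Set.Ici 0))
    (hx_ode : ∀ t : ℝ, 0 < t → HasDerivAt x (-f (x t) + g t) t)
    (hx_pos : ∀ t : ℝ, 0 ≤ t → 0 < x t)
    (hg_pos : ∀ t : ℝ, 0 < t → 0 < g t)
    (hf_posv : ∀ y : ℝ, 0 < y → 0 < f y)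
    (hAM : ∀ a b : ℝ, 0 < a → a ≤ b → b ≤ x₁ → (1-ε/8) * f a ≤ f b)
    (t₁ : ℝ) (ht₁ : 2 ≤ t₁)
    (hsmall : ∀ s : ℝ, 2⁻¹*t₁ ≤ s → x s ≤ x₁ ∧ x s ≤ 1)
    (hwin : ∀ s ∈ Icc (2⁻¹*t₁) t₁, (1-ε/8)*g t₁ ≤ g s ∧ g s ≤ (1+ε/8)*g t₁)
    (htg : 16/ε ≤ t₁ * g t₁) :
    (1-ε) * g t₁ ≤ f (x t₁) ∧ f (x t₁) ≤ (1+ε) * g t₁ := by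
  have ht₁pos : (0:ℝ) < t₁ := by linarith
  have hhalfpos : (0:ℝ) < 2⁻¹*t₁ := by positivity
  have hhalf_le : 2⁻¹*t₁ ≤ t₁ := by linarith
  set p : ℝ := x t₁ with hp
  have hppos : 0 < p := hx_pos t₁ ht₁pos.le
  have hpx₁ : p ≤ x₁ := (hsmall t₁ hhalf_le).1
  have hp1 : p ≤ 1 := (hsmall t₁ hhalf_le).2
  have hgt₁ : 0 < g t₁ := hg_pos t₁ ht₁pos
  set w : ℝ := (ε/4) * g t₁ with hw
  have hwpos : 0 < w := by positivity
  have hcont_sub : ∀ a : ℝ, 0 < a → ContinuousOn x (Icc a t₁) :=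
    fun a ha => hx_cont.mono (fun s hs => le_trans ha.le hs.1)
  have hwt : 2 ≤ w * (2⁻¹*t₁) := by
    have : w * (2⁻¹*t₁) = (ε/8) * (t₁ * g t₁) := by rw [hw]; ring
    rw [this]
    calc (2:ℝ) = (ε/8) * (16/ε) := by field_simp; ring
      _ ≤ (ε/8) * (t₁ * g t₁) := by
          apply mul_le_mul_of_nonneg_left htg (by positivity)
  constructor
  · -- LOWER BOUND
    by_contra hcon
    push_neg at hcon
    -- derivative at t₁ is positive
    have hder_t₁ : HasDerivAt x (-f p + g t₁) t₁ := hx_ode t₁ ht₁pos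
    have hfp_pos : 0 < f p := hf_posv p hppos
    have hdpos : 0 < -f p + g t₁ := by nlinarith
    obtain ⟨l, hl, hlsub⟩ :=
      mem_nhdsLT_iff_exists_Ioo_subset.1 (left_lt_of_deriv_pos hder_t₁ hdpos)
    set l' : ℝ := max l (2⁻¹*t₁) with hl'
    have hl't₁ : l' < t₁ := max_lt hl (by linarith)
    have hleft : ∀ s : ℝ, l' < s → s < t₁ → x s < p := by
      intro s h1 h2
      exact hlsub ⟨lt_of_le_of_lt (le_max_left _ _) h1, h2⟩
    -- drift bound where x s ≤ p
    have key : ∀ s ∈ Icc (2⁻¹*t₁) t₁, x s ≤ p → w ≤ -f (x s) + g s := by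
      intro s hs hxs
      have hxspos : 0 < x s := hx_pos s (by linarith [hs.1])
      have h1 : (1-ε/8) * f (x s) ≤ f p := hAM (x s) p hxspos hxs hpx₁
      have h2 := (hwin s hs).1
      have h3 : (1-ε/8) * f (x s) < (1-ε) * g t₁ := by nlinarith
      -- want : (ε/4) g t₁ ≤ - f (x s) + g s
      nlinarith [hgt₁, h2]
    set S : Set ℝ := {s ∈ Icc (2⁻¹*t₁) t₁ | p < x s} with hS
    by_cases hSne : S.Nonempty
    · -- last time above p
      have hSbdd : BddAbove S := ⟨t₁, fun s hs => hs.1.2⟩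
      set ρ : ℝ := sSup S with hρ
      obtain ⟨s₀, hs₀⟩ := id hSne
      have hρ1 : 2⁻¹*t₁ ≤ ρ := le_trans hs₀.1.1 (le_csSup hSbdd hs₀)
      have hρl' : ρ ≤ l' := by
        apply csSup_le hSne
        intro s hs
        by_contra hsl
        push_neg at hsl
        have hst₁ : s < t₁ := by
          rcases lt_or_eq_of_le hs.1.2 with h | h
          · exact h
          · exfalso; rw [h] at hs; exact absurd hs.2 (lt_irrefl p)
        exact absurd hs.2 (not_lt.2 (hleft s hsl hst₁).le)
      have hρt₁ : ρ < t₁ := lt_of_le_of_lt hρl' hl't₁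
      have hρpos : 0 < ρ := by linarith
      -- x ρ ≥ p
      have hxρ : p ≤ x ρ := by
        have hclosure : ρ ∈ closure S := csSup_mem_closure hSne hSbdd
        have hCclosed : IsClosed (Icc (2⁻¹*t₁) t₁ ∩ x ⁻¹' Ici p) :=
          (hcont_sub (2⁻¹*t₁) hhalfpos).preimage_isClosed_of_isClosed
            isClosed_Icc (isClosed_Ici (a := p))
        have hsub : S ⊆ Icc (2⁻¹*t₁) t₁ ∩ x ⁻¹' Ici p :=
          fun s hs => ⟨hs.1, hs.2.le⟩
        exact (closure_minimal hsub hCclosed hclosure).2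
      -- for σ ∈ (ρ, t₁), growth estimate
      have hgrow : ∀ σ ∈ Ioo ρ t₁, p ≥ x σ + w * (t₁ - σ) := by
        intro σ hσ
        have hσpos : 0 < σ := lt_trans hρpos hσ.1
        have := growth_est (w := w) hσ.2.le (hcont_sub σ hσpos) ?_
        · linarith
        intro s hs
        have hst₁ : s ∈ Icc (2⁻¹*t₁) t₁ := ⟨by linarith [hσ.1, hs.1], hs.2.le⟩
        have hsnotS : s ∉ S := fun hmem =>
          absurd (le_csSup hSbdd hmem) (not_le.2 (lt_trans hσ.1 hs.1))
        have hxle : x s ≤ p := by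
          by_contra hgt
          push_neg at hgt
          exact hsnotS ⟨hst₁, hgt⟩
        exact ⟨-f (x s) + g s, hx_ode s (by linarith [hst₁.1]),
          key s hst₁ hxle⟩
      -- limit σ → ρ⁺
      have hlim : Tendsto (fun σ => x σ + w * (t₁ - σ)) (𝓝[>] ρ) (nhds (x ρ + w * (t₁ - ρ))) := by
        have hca : ContinuousAt x ρ := hx_cont.continuousAt (Ici_mem_nhds hρpos)
        have h1 : Tendsto x (𝓝[>] ρ) (nhds (x ρ)) := hca.tendsto.mono_left nhdsWithin_le_nhds
        have h2 : Tendsto (fun σ => w * (t₁ - σ)) (𝓝[>] ρ) (nhds (w * (t₁ - ρ))) :=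
          (((continuous_const.mul (continuous_const.sub continuous_id)).tendsto ρ).mono_left
            nhdsWithin_le_nhds)
        exact h1.add h2
      have hev : ∀ᶠ σ in 𝓝[>] ρ, x σ + w * (t₁ - σ) ≤ p := by
        filter_upwards [Ioo_mem_nhdsGT_of_mem (Set.left_mem_Ico.2 hρt₁)] with σ hσ
        exact hgrow σ hσ
      have := le_of_tendsto hlim hev
      nlinarith [this, hxρ]
    · -- x stays ≤ p on the whole window
      push_neg at hSne
      have hall : ∀ s ∈ Icc (2⁻¹*t₁) t₁, x s ≤ p := by
        intro s hs
        by_contra hgt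
        push_neg at hgt
        have : s ∈ S := ⟨hs, hgt⟩
        rw [hSne] at this
        exact this
      have := growth_est (w := w) hhalf_le (hcont_sub _ hhalfpos) ?_
      · have hx0 : 0 < x (2⁻¹*t₁) := hx_pos _ hhalfpos.le
        have : w * (t₁ - 2⁻¹*t₁) ≤ p - x (2⁻¹*t₁) := by linarith
        have ht₁' : t₁ - 2⁻¹*t₁ = 2⁻¹*t₁ := by ring
        rw [ht₁'] at this
        linarith [hwt, hp1]
      intro s hs
      have hst₁ : s ∈ Icc (2⁻¹*t₁) t₁ := ⟨hs.1.le, hs.2.le⟩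
      exact ⟨-f (x s) + g s, hx_ode s (by linarith [hs.1]), key s hst₁ (hall s hst₁)⟩
  · -- UPPER BOUND
    by_contra hcon
    push_neg at hcon
    have hder_t₁ : HasDerivAt x (-f p + g t₁) t₁ := hx_ode t₁ ht₁pos
    have hdneg : -f p + g t₁ < 0 := by nlinarith
    obtain ⟨l, hl, hlsub⟩ :=
      mem_nhdsLT_iff_exists_Ioo_subset.1 (left_gt_of_deriv_neg hder_t₁ hdneg)
    set l' : ℝ := max l (2⁻¹*t₁) with hl'
    have hl't₁ : l' < t₁ := max_lt hl (by linarith)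
    have hleft : ∀ s : ℝ, l' < s → s < t₁ → p < x s := by
      intro s h1 h2
      exact hlsub ⟨lt_of_le_of_lt (le_max_left _ _) h1, h2⟩
    have key : ∀ s ∈ Icc (2⁻¹*t₁) t₁, p ≤ x s → -f (x s) + g s ≤ -w := by
      intro s hs hxs
      have hxsx₁ : x s ≤ x₁ := (hsmall s hs.1).1
      have h1 : (1-ε/8) * f p ≤ f (x s) := hAM p (x s) hppos hxs hxsx₁
      have h2 := (hwin s hs).2
      -- f p > (1+ε) g t₁
      nlinarith [hgt₁, h2]
    set S : Set ℝ := {s ∈ Icc (2⁻¹*t₁) t₁ | x s < p} with hS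
    by_cases hSne : S.Nonempty
    · have hSbdd : BddAbove S := ⟨t₁, fun s hs => hs.1.2⟩
      set ρ : ℝ := sSup S with hρ
      obtain ⟨s₀, hs₀⟩ := id hSne
      have hρ1 : 2⁻¹*t₁ ≤ ρ := le_trans hs₀.1.1 (le_csSup hSbdd hs₀)
      have hρl' : ρ ≤ l' := by
        apply csSup_le hSne
        intro s hs
        by_contra hsl
        push_neg at hsl
        have hst₁ : s < t₁ := by
          rcases lt_or_eq_of_le hs.1.2 with h | h
          · exact h
          · exfalso; rw [h] at hs; exact absurd hs.2 (lt_irrefl p)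
        exact absurd hs.2 (not_lt.2 (hleft s hsl hst₁).le)
      have hρt₁ : ρ < t₁ := lt_of_le_of_lt hρl' hl't₁
      have hρpos : 0 < ρ := by linarith
      have hxρ : x ρ ≤ p := by
        have hclosure : ρ ∈ closure S := csSup_mem_closure hSne hSbdd
        have hCclosed : IsClosed (Icc (2⁻¹*t₁) t₁ ∩ x ⁻¹' Iic p) :=
          (hcont_sub (2⁻¹*t₁) hhalfpos).preimage_isClosed_of_isClosed
            isClosed_Icc (isClosed_Iic (a := p))
        have hsub : S ⊆ Icc (2⁻¹*t₁) t₁ ∩ x ⁻¹' Iic p :=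
          fun s hs => ⟨hs.1, hs.2.le⟩
        exact (closure_minimal hsub hCclosed hclosure).2
      have hdecay : ∀ σ ∈ Ioo ρ t₁, p ≤ x σ - w * (t₁ - σ) := by
        intro σ hσ
        have hσpos : 0 < σ := lt_trans hρpos hσ.1
        have := decay_est (w := w) hσ.2.le (hcont_sub σ hσpos) ?_
        · linarith
        intro s hs
        have hst₁ : s ∈ Icc (2⁻¹*t₁) t₁ := ⟨by linarith [hσ.1, hs.1], hs.2.le⟩
        have hsnotS : s ∉ S := fun hmem =>
          absurd (le_csSup hSbdd hmem) (not_le.2 (lt_trans hσ.1 hs.1))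
        have hxge : p ≤ x s := by
          by_contra hgt
          push_neg at hgt
          exact hsnotS ⟨hst₁, hgt⟩
        exact ⟨-f (x s) + g s, hx_ode s (by linarith [hst₁.1]), key s hst₁ hxge⟩
      have hlim : Tendsto (fun σ => x σ - w * (t₁ - σ)) (𝓝[>] ρ) (nhds (x ρ - w * (t₁ - ρ))) := by
        have hca : ContinuousAt x ρ := hx_cont.continuousAt (Ici_mem_nhds hρpos)
        have h1 : Tendsto x (𝓝[>] ρ) (nhds (x ρ)) := hca.tendsto.mono_left nhdsWithin_le_nhds
        have h2 : Tendsto (fun σ => w * (t₁ - σ)) (𝓝[>] ρ) (nhds (w * (t₁ - ρ))) :=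
          (((continuous_const.mul (continuous_const.sub continuous_id)).tendsto ρ).mono_left
            nhdsWithin_le_nhds)
        exact h1.sub h2
      have hev : ∀ᶠ σ in 𝓝[>] ρ, p ≤ x σ - w * (t₁ - σ) := by
        filter_upwards [Ioo_mem_nhdsGT_of_mem (Set.left_mem_Ico.2 hρt₁)] with σ hσ
        exact hdecay σ hσ
      have := ge_of_tendsto hlim hev
      nlinarith [this, hxρ]
    · push_neg at hSne
      have hall : ∀ s ∈ Icc (2⁻¹*t₁) t₁, p ≤ x s := by
        intro s hs
        by_contra hgt
        push_neg at hgt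
        have : s ∈ S := ⟨hs, hgt⟩
        rw [hSne] at this
        exact this
      have := decay_est (w := w) hhalf_le (hcont_sub _ hhalfpos) ?_
      · have hx1 : x (2⁻¹*t₁) ≤ 1 := (hsmall _ le_rfl).2
        have ht₁' : t₁ - 2⁻¹*t₁ = 2⁻¹*t₁ := by ring
        rw [ht₁'] at this
        nlinarith [hppos, hwt]
      intro s hs
      have hst₁ : s ∈ Icc (2⁻¹*t₁) t₁ := ⟨hs.1.le, hs.2.le⟩
      exact ⟨-f (x s) + g s, hx_ode s (by linarith [hs.1]), key s hst₁ (hall s hst₁)⟩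

/-- Theorem 2.5(ii). -/
theorem stmt_6
    (f g F Finv : ℝ → ℝ) (ξ : ℝ) (x : ℝ → ℝ)
    (hf_cont : Continuous f) (hf_lip : LocallyLipschitz f)
    (hf_sign : ∀ y : ℝ, y ≠ 0 → 0 < y * f y) (hf_zero : f 0 = 0)
    (hg_cont : ContinuousOn g (Set.Ici 0)) (hg_pos : ∀ t : ℝ, 0 < t → 0 < g t)
    (hF : ∀ y : ℝ, 0 < y → F y = ∫ u in y..(1:ℝ), 1 / f u)
    (hF_top : Tendsto F (nhdsWithin 0 (Set.Ioi 0)) atTop)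
    (hF_anti : StrictAntiOn F (Set.Ioi 0))
    (hFinv : ∀ t : ℝ, 0 ≤ t → 0 < Finv t ∧ F (Finv t) = t)
    (hFinv_to0 : Tendsto Finv atTop (nhds 0))
    (hξ : 0 < ξ) (hx : IsSol f g ξ x)
    (hLinf : Tendsto (fun t => g t / f (Finv t)) atTop atTop)
    (β : ℝ) (hβ : 1 < β) (hfRV : RVat0 f β)
    (hgSV : RVatInf g 0)
    (γ₁ : ℝ → ℝ) (hγ₁_pos : ∀ t : ℝ, 0 < t → 0 < γ₁ t)
    (hγ₁_anti : StrictAntiOn γ₁ (Set.Ioi 0))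
    (hgγ₁ : Tendsto (fun t => g t / γ₁ t) atTop (nhds 1))
    (hx_to0 : Tendsto x atTop (nhds 0)) :
    Tendsto (fun t => f (x t) / g t) atTop (nhds 1) := by
  obtain ⟨hx_cont, hx0, hx_ode⟩ := hx
  have hf_posv : ∀ y : ℝ, 0 < y → 0 < f y := by
    intro y hy
    have := hf_sign y (ne_of_gt hy)
    nlinarith
  have hx_pos : ∀ t : ℝ, 0 ≤ t → 0 < x t :=
    sol_pos hf_zero hg_pos hξ hx_cont hx0 hx_ode
  -- the two slow-variation ratio limits for γ₁
  have hsv_half : Tendsto (fun t => g (2⁻¹*t) / g t) atTop (nhds 1) := by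
    have := hgSV 2⁻¹ (by norm_num)
    rwa [Real.rpow_zero] at this
  have hsv_two : Tendsto (fun t => g (2*t) / g t) atTop (nhds 1) := by
    have := hgSV 2 (by norm_num)
    rwa [Real.rpow_zero] at this
  have hγhalf : Tendsto (fun t => γ₁ (2⁻¹*t) / γ₁ t) atTop (nhds 1) :=
    gamma_ratio (by norm_num) hγ₁_pos hg_pos hgγ₁ hsv_half
  have hγtwo : Tendsto (fun t => γ₁ (2*t) / γ₁ t) atTop (nhds 1) :=
    gamma_ratio (by norm_num) hγ₁_pos hg_pos hgγ₁ hsv_two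
  have htγ : Tendsto (fun t => t * γ₁ t) atTop atTop :=
    tgamma_top hg_pos hγ₁_pos hγ₁_anti hγtwo
  rw [Metric.tendsto_atTop]
  intro ε hε
  set ε' : ℝ := min (ε/2) 1 with hε'
  have hε'pos : 0 < ε' := by
    apply lt_min (by linarith) one_pos
  have hε'le1 : ε' ≤ 1 := min_le_right _ _
  have hε'ltε : ε' < ε := lt_of_le_of_lt (min_le_left _ _) (by linarith)
  -- uniform convergence and almost monotonicity
  obtain ⟨x₁, hx₁pos, hx₁le, huct⟩ := uctf hf_cont hf_posv hfRV (ε'/8)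
    (by positivity) (by linarith)
  have hAM : ∀ a b : ℝ, 0 < a → a ≤ b → b ≤ x₁ → (1-ε'/8) * f a ≤ f b := by
    apply almost_mono hf_posv hβ.le (by positivity) (by linarith)
    intro z hz hzle lam hlam1 hlam2
    exact (huct z hz hzle lam hlam1 hlam2).1
  -- window bounds for g
  have hwin_ev := g_window hg_pos hγ₁_pos hγ₁_anti hgγ₁ hγhalf (ε'/8)
    (by positivity) (by linarith)
  obtain ⟨T₁, hT₁⟩ := eventually_atTop.1 hwin_ev
  -- eventual lower bound for t * g t
  have htg_ev : ∀ᶠ t in atTop, 16/ε' ≤ t * g t := by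
    have h1 : ∀ᶠ t in atTop, (1/2:ℝ) < g t / γ₁ t :=
      hgγ₁.eventually (eventually_gt_nhds (by norm_num))
    have h2 : ∀ᶠ t in atTop, 32/ε' ≤ t * γ₁ t := (tendsto_atTop.1 htγ) (32/ε')
    filter_upwards [h1, h2, eventually_gt_atTop (0:ℝ)] with t ht1 ht2 ht3
    have hγp := hγ₁_pos t ht3
    rw [lt_div_iff₀ hγp] at ht1
    have hm := mul_lt_mul_of_pos_left ht1 ht3
    have h16 : 16/ε' = (32/ε')/2 := by ring
    nlinarith [hm, ht2]
  obtain ⟨T₂, hT₂⟩ := eventually_atTop.1 htg_ev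
  -- eventual smallness of x
  have hsm_ev : ∀ᶠ s in atTop, x s ≤ x₁ ∧ x s ≤ 1 := by
    have h1 : ∀ᶠ s in atTop, |x s - 0| < min x₁ 1 := by
      have := Metric.tendsto_atTop.1 hx_to0 (min x₁ 1) (lt_min hx₁pos one_pos)
      obtain ⟨N, hN⟩ := this
      rw [eventually_atTop]
      exact ⟨N, fun s hs => by simpa [Real.dist_eq] using hN s hs⟩
    filter_upwards [h1] with s hs
    rw [abs_lt, sub_zero] at hs
    exact ⟨le_trans hs.2.le (min_le_left _ _), le_trans hs.2.le (min_le_right _ _)⟩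
  obtain ⟨T₃, hT₃⟩ := eventually_atTop.1 hsm_ev
  refine ⟨max 2 (max T₁ (max T₂ (2*T₃))), fun t₁ ht₁ => ?_⟩
  have h2t₁ : 2 ≤ t₁ := le_trans (le_max_left _ _) ht₁
  have hT₁t₁ : T₁ ≤ t₁ := le_trans (le_trans (le_max_left _ _) (le_max_right _ _)) ht₁
  have hT₂t₁ : T₂ ≤ t₁ :=
    le_trans (le_trans (le_trans (le_max_left _ _) (le_max_right _ _)) (le_max_right _ _)) ht₁
  have hT₃t₁ : 2*T₃ ≤ t₁ :=
    le_trans (le_trans (le_trans (le_max_right _ _) (le_max_right _ _)) (le_max_right _ _)) ht₁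
  have hbar := barrier hε'pos hε'le1 hx_cont hx_ode hx_pos hg_pos hf_posv hAM t₁ h2t₁
    (fun s hs => hT₃ s (by linarith)) (hT₁ t₁ hT₁t₁) (hT₂ t₁ hT₂t₁)
  have hgt₁ : 0 < g t₁ := hg_pos t₁ (by linarith)
  rw [Real.dist_eq]
  have h1 : f (x t₁) / g t₁ - 1 ≤ ε' := by
    rw [div_sub_one (ne_of_gt hgt₁), div_le_iff₀ hgt₁]
    nlinarith [hbar.2]
  have h2 : -(ε') ≤ f (x t₁) / g t₁ - 1 := by
    rw [div_sub_one (ne_of_gt hgt₁), le_div_iff₀ hgt₁]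
    nlinarith [hbar.1]
  have habs : |f (x t₁) / g t₁ - 1| ≤ ε' := abs_le.2 ⟨h2, h1⟩
  linarith
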